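/- If A is a free abelian group, then the Jacobson radical of End(A) is zero. -/

import Mathlib

/-- If every `1 - n * a` is a unit in `ℤ`, then `a = 0`. -/
lemma int_eq_zero_of_units (a : ℤ) (h : ∀ n : ℤ, IsUnit (1 - n * a)) : a = 0 := by
  have h1 := Int.isUnit_iff.1 (h 1)
  have h2 := Int.isUnit_iff.1 (h (-1))
  omega

theorem jacobson_eq_bot_of_free {A : Type*} [AddCommGroup A] [Module.Free ℤ A] :
    (⊥ : Ideal (AddMonoid.End A)).jacobson = ⊥ := by
  rw [eq_bot_iff]
  intro f hf
  rw [Ideal.mem_bot]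
  classical
  let b := Module.Free.chooseBasis ℤ A
  -- key: every coefficient of `f` vanishes
  have key : ∀ (i j : Module.Free.ChooseBasisIndex ℤ A), b.repr (f (b j)) i = 0 := by
    intro i j
    apply int_eq_zero_of_units
    intro n
    set a : ℤ := b.repr (f (b j)) i with ha
    -- the auxiliary endomorphism
    let y : AddMonoid.End A :=
      { toFun := fun x => -((n * b.repr x i) • b j)
        map_zero' := by simp
        map_add' := by intro u v; simp [mul_add, add_smul]; abel }
    obtain ⟨z, hz⟩ := Ideal.mem_jacobson_iff.1 hf y
    rw [Ideal.mem_bot, sub_eq_zero] at hz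
    -- z * (y*f + 1) = 1
    set u : AddMonoid.End A := y * f + 1 with hu
    have hzu : z * u = 1 := by
      rw [hu, mul_add, mul_one, ← mul_assoc, hz]
    -- z itself is of the form y'*f+1
    have hzform : (-(z * y)) * f + 1 = z := by
      rw [neg_mul, eq_sub_of_add_eq hz]
      abel
    obtain ⟨w, hw⟩ := Ideal.mem_jacobson_iff.1 hf (-(z * y))
    rw [Ideal.mem_bot, sub_eq_zero] at hw
    have hwz : w * z = 1 := by
      rw [← hzform, mul_add, mul_one, ← mul_assoc, hw]
    have hwu : w = u := by
      calc w = w * (z * u) := by rw [hzu, mul_one]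
        _ = (w * z) * u := by rw [mul_assoc]
        _ = u := by rw [hwz, one_mul]
    have huz : u * z = 1 := by rw [← hwu, hwz]
    -- surjectivity: u (z (b j)) = b j
    set x : A := z (b j) with hx
    have hux : u x = b j := by
      have := congrArg (fun g : AddMonoid.End A => g (b j)) huz
      simpa [hx] using this
    -- u x = x - (n * repr (f x) i) • b j
    have hux' : -((n * b.repr (f x) i) • b j) + x = b j := hux
    -- coordinates
    have hrepr := congrArg b.repr hux'
    rw [map_add, map_neg, map_smul, b.repr_self] at hrepr
    have hcoord : ∀ k, -((n * b.repr (f x) i) * (Finsupp.single j (1:ℤ)) k)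
        + b.repr x k = (Finsupp.single j (1:ℤ)) k := by
      intro k
      have hk := congrArg (fun v : _ →₀ ℤ => v k) hrepr
      simp only [Finsupp.add_apply, Finsupp.neg_apply, Finsupp.smul_apply,
        smul_eq_mul] at hk
      exact hk
    have hxk : ∀ k, k ≠ j → b.repr x k = 0 := by
      intro k hk
      have := hcoord k
      simpa [Finsupp.single_apply, Ne.symm hk] using this
    set c : ℤ := b.repr x j with hc
    have hxc : x = c • b j := by
      have hrepr' : b.repr x = Finsupp.single j c := by
        ext k
        by_cases hk : k = j
        · subst hk; simp [hc, Finsupp.single_apply]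
        · simp [hxk k hk, Finsupp.single_apply, Ne.symm hk]
      have := congrArg b.repr.symm hrepr'
      simpa [Module.Basis.repr_symm_single] using this
    have hfx : b.repr (f x) i = c * a := by
      rw [hxc, map_zsmul, map_zsmul]
      simp [ha, smul_eq_mul]
    have hj := hcoord j
    rw [hfx] at hj
    simp only [Finsupp.single_eq_same] at hj
    rw [← hc] at hj
    have hkey : c * (1 - n * a) = 1 := by linear_combination hj
    exact IsUnit.of_mul_eq_one _ (by rw [mul_comm]; exact hkey)
  -- conclude f = 0
  have hbj : ∀ j, f (b j) = 0 := by
    intro j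
    have : b.repr (f (b j)) = 0 := by
      ext i; simp [key i j]
    simpa using congrArg b.repr.symm this
  have hlin : f.toIntLinearMap = 0 := b.ext fun j => by exact hbj j
  exact DFunLike.ext f 0 fun x => congrArg (fun g : A →ₗ[ℤ] A => g x) hlin
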